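/- In QHC, ⊢ ∇(!p ∨ !¬p) → (¬!¬p → !p): provable decidability of a proposition implies its stability. -/
import Mathlib


/- Problem (intuitionistic) formulas and proposition (classical) formulas of QHC. -/
mutual
inductive PF : Type
  | var : Nat → PF
  | bot : PF
  | and : PF → PF → PF
  | or : PF → PF → PF
  | imp : PF → PF → PF
  | bang : CF → PF
inductive CF : Type
  | var : Nat → CF
  | fls : CF
  | and : CF → CF → CF
  | or : CF → CF → CF
  | imp : CF → CF → CF
  | quest : PF → CF
end

def PF.neg (α : PF) : PF := α.imp PF.bot
def CF.neg (p : CF) : CF := p.imp CF.fls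
def PF.iff (α β : PF) : PF := (α.imp β).and (β.imp α)
def CF.iff (p q : CF) : CF := (p.imp q).and (q.imp p)
def CF.box (p : CF) : CF := CF.quest (PF.bang p)
def PF.nabla (α : PF) : PF := PF.bang (CF.quest α)

/- Derivability in QHC, parameterized by a set `Ax` of extra problem axioms
(used to treat the axiom ¬!0 and its variants uniformly). Intuitionistic logic
on problems, classical logic on propositions, the rules α ⊢ ?α and p ⊢ !p, and
the mixed axioms ?!p → p, α → !?α, !(p→q) → (!p → !q), ?(α→β) → (?α → ?β). -/
mutual
inductive ProvP (Ax : PF → Prop) : PF → Prop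
  | axm {α} : Ax α → ProvP Ax α
  | mp {α β} : ProvP Ax (α.imp β) → ProvP Ax α → ProvP Ax β
  | ak (α β : PF) : ProvP Ax (α.imp (β.imp α))
  | as (α β γ : PF) : ProvP Ax ((α.imp (β.imp γ)).imp ((α.imp β).imp (α.imp γ)))
  | andI (α β : PF) : ProvP Ax (α.imp (β.imp (α.and β)))
  | andE1 (α β : PF) : ProvP Ax ((α.and β).imp α)
  | andE2 (α β : PF) : ProvP Ax ((α.and β).imp β)
  | orI1 (α β : PF) : ProvP Ax (α.imp (α.or β))
  | orI2 (α β : PF) : ProvP Ax (β.imp (α.or β))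
  | orE (α β γ : PF) : ProvP Ax ((α.imp γ).imp ((β.imp γ).imp ((α.or β).imp γ)))
  | exf (α : PF) : ProvP Ax (PF.bot.imp α)
  | bangIntro {p} : ProvC Ax p → ProvP Ax (PF.bang p)
  | bangImp (p q : CF) : ProvP Ax ((PF.bang (p.imp q)).imp ((PF.bang p).imp (PF.bang q)))
  | bangQuest (α : PF) : ProvP Ax (α.imp (PF.bang (CF.quest α)))
inductive ProvC (Ax : PF → Prop) : CF → Prop
  | mp {p q} : ProvC Ax (p.imp q) → ProvC Ax p → ProvC Ax q
  | ak (p q : CF) : ProvC Ax (p.imp (q.imp p))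
  | as (p q r : CF) : ProvC Ax ((p.imp (q.imp r)).imp ((p.imp q).imp (p.imp r)))
  | andI (p q : CF) : ProvC Ax (p.imp (q.imp (p.and q)))
  | andE1 (p q : CF) : ProvC Ax ((p.and q).imp p)
  | andE2 (p q : CF) : ProvC Ax ((p.and q).imp q)
  | orI1 (p q : CF) : ProvC Ax (p.imp (p.or q))
  | orI2 (p q : CF) : ProvC Ax (q.imp (p.or q))
  | orE (p q r : CF) : ProvC Ax ((p.imp r).imp ((q.imp r).imp ((p.or q).imp r)))
  | exf (p : CF) : ProvC Ax (CF.fls.imp p)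
  | lem (p : CF) : ProvC Ax (p.or (p.imp CF.fls))
  | questIntro {α} : ProvP Ax α → ProvC Ax (CF.quest α)
  | questImp (α β : PF) : ProvC Ax ((CF.quest (α.imp β)).imp ((CF.quest α).imp (CF.quest β)))
  | questBang (p : CF) : ProvC Ax ((CF.quest (PF.bang p)).imp p)
end

/-- The axiom (!⊥): ¬!0. -/
def QHCAx : PF → Prop := fun α => α = (PF.bang CF.fls).imp PF.bot

/-- Derivability of a problem in QHC. -/
def PrvP (α : PF) : Prop := ProvP QHCAx α
/-- Derivability of a proposition in QHC. -/
def PrvC (p : CF) : Prop := ProvC QHCAx p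


namespace QHCAux
variable {Ax : PF → Prop}

/-- mpd: ⊢α→(β→γ), ⊢α→β ⟹ ⊢α→γ -/
theorem mpd {α β γ : PF} (h1 : ProvP Ax (α.imp (β.imp γ)))
    (h2 : ProvP Ax (α.imp β)) : ProvP Ax (α.imp γ) :=
  ProvP.mp (ProvP.mp (ProvP.as α β γ) h1) h2

theorem const {β : PF} (α : PF) (h : ProvP Ax β) : ProvP Ax (α.imp β) :=
  ProvP.mp (ProvP.ak β α) h

theorem impSelf (α : PF) : ProvP Ax (α.imp α) :=
  mpd (ProvP.ak α (α.imp α)) (ProvP.ak α α)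

theorem trans {α β γ : PF} (h1 : ProvP Ax (α.imp β))
    (h2 : ProvP Ax (β.imp γ)) : ProvP Ax (α.imp γ) :=
  mpd (const α h2) h1

/-- swap: ⊢α→(β→γ) ⟹ ⊢β→(α→γ) -/
theorem swap {α β γ : PF} (h : ProvP Ax (α.imp (β.imp γ))) :
    ProvP Ax (β.imp (α.imp γ)) :=
  mpd (const β (ProvP.mp (ProvP.as α β γ) h)) (ProvP.ak β α)

/-- comp2: ⊢α→(β→γ), ⊢δ→β ⟹ ⊢α→(δ→γ) -/
theorem comp2 {α β γ δ : PF} (h1 : ProvP Ax (α.imp (β.imp γ)))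
    (h2 : ProvP Ax (δ.imp β)) : ProvP Ax (α.imp (δ.imp γ)) :=
  swap (trans h2 (swap h1))

/-- postcomp2: ⊢α→(β→γ), ⊢γ→ε ⟹ ⊢α→(β→ε) -/
theorem postcomp2 {α β γ ε : PF} (h1 : ProvP Ax (α.imp (β.imp γ)))
    (h2 : ProvP Ax (γ.imp ε)) : ProvP Ax (α.imp (β.imp ε)) :=
  trans h1 (ProvP.mp (ProvP.as β γ ε) (const β h2))

end QHCAux

open QHCAux in
theorem qhc_provable_decidability_implies_stability (p : CF) :
    PrvP ((PF.nabla ((PF.bang p).or (PF.bang (CF.neg p)))).imp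
      ((PF.neg (PF.bang (CF.neg p))).imp (PF.bang p))) := by
  -- abbreviations
  set a := PF.bang p with ha
  set n := PF.bang (CF.neg p) with hn
  set δ := a.or n with hδ
  set χ := PF.neg n with hχ
  set β := χ.imp a with hβ
  -- δ → β  (intuitionistic)
  have hna : ProvP QHCAx ((n.imp PF.bot).imp (n.imp a)) :=
    ProvP.mp (ProvP.as n PF.bot a) (const n (ProvP.exf a))
  have h2 : ProvP QHCAx (n.imp β) := swap hna
  have dβ : ProvP QHCAx (δ.imp β) :=
    ProvP.mp (ProvP.mp (ProvP.orE a n β) (ProvP.ak a χ)) h2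
  -- ∇δ → ∇β
  have qdq : ProvC QHCAx ((CF.quest δ).imp (CF.quest β)) :=
    ProvC.mp (ProvC.questImp δ β) (ProvC.questIntro dβ)
  have step3 : ProvP QHCAx ((PF.nabla δ).imp (PF.nabla β)) :=
    ProvP.mp (ProvP.bangImp (CF.quest δ) (CF.quest β)) (ProvP.bangIntro qdq)
  -- ∇β → (∇χ → ∇a)
  have c1 : ProvC QHCAx ((CF.quest β).imp ((CF.quest χ).imp (CF.quest a))) :=
    ProvC.questImp χ a
  have t1 : ProvP QHCAx ((PF.nabla β).imp ((PF.nabla χ).imp (PF.nabla a))) :=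
    trans
      (ProvP.mp (ProvP.bangImp (CF.quest β) ((CF.quest χ).imp (CF.quest a)))
        (ProvP.bangIntro c1))
      (ProvP.bangImp (CF.quest χ) (CF.quest a))
  -- ∇a → a
  have na : ProvP QHCAx ((PF.nabla a).imp a) :=
    ProvP.mp (ProvP.bangImp (CF.quest a) p) (ProvP.bangIntro (ProvC.questBang p))
  -- assemble
  have t3 : ProvP QHCAx ((PF.nabla β).imp (χ.imp (PF.nabla a))) :=
    comp2 t1 (ProvP.bangQuest χ)
  have t5 : ProvP QHCAx ((PF.nabla β).imp (χ.imp a)) := postcomp2 t3 na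
  exact trans step3 t5
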